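/- The Banach algebra ℓ² with pointwise multiplication is approximately semi-amenable: every continuous derivation D from ℓ² into any Banach ℓ²-bimodule X is approximately semi-inner, i.e. there exist nets (m_i), (n_i) in X with D(a) = lim_i (a·m_i − n_i·a) for all a ∈ ℓ². -/
import Mathlib


open Filter Topology MeasureTheory

/-- A Banach bimodule structure over a (not necessarily unital) normed algebra `A`.
`l a x` is the left action `a • x` and `r a x` is the right action `x • a`. -/
structure BBimod (A X : Type*) [NonUnitalNormedRing A] [NormedSpace ℂ A]
    [NormedAddCommGroup X] [NormedSpace ℂ X] where
  l : A →L[ℂ] X →L[ℂ] X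
  r : A →L[ℂ] X →L[ℂ] X
  l_mul : ∀ a b x, l (a * b) x = l a (l b x)
  r_mul : ∀ a b x, r (a * b) x = r b (r a x)
  lr : ∀ a b x, l a (r b x) = r b (l a x)

namespace BBimod

variable {A X : Type*} [NonUnitalNormedRing A] [NormedSpace ℂ A]
    [NormedAddCommGroup X] [NormedSpace ℂ X]

/-- The dual bimodule structure on `X →L[ℂ] ℂ`:
`(a • f) x = f (x • a)` and `(f • a) x = f (a • x)`. -/
noncomputable def dual (M : BBimod A X) : BBimod A (X →L[ℂ] ℂ) where
  l := (ContinuousLinearMap.compL ℂ X X ℂ).flip.comp M.r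
  r := (ContinuousLinearMap.compL ℂ X X ℂ).flip.comp M.l
  l_mul := by intro a b f; ext x; simp [M.r_mul a b x]
  r_mul := by intro a b f; ext x; simp [M.l_mul a b x]
  lr := by intro a b f; ext x; simp [M.lr]

/-- `D` is a derivation: `D (a b) = a • D b + D a • b`. -/
def IsDeriv (M : BBimod A X) (D : A →L[ℂ] X) : Prop :=
  ∀ a b, D (a * b) = M.l a (D b) + M.r b (D a)

/-- `D` is inner: `D a = a • x - x • a` for some `x`. -/
def IsInner (M : BBimod A X) (D : A →L[ℂ] X) : Prop :=
  ∃ x, ∀ a, D a = M.l a x - M.r a x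

/-- `D` is approximately inner: a net of inner derivations converges to `D`
in the strong operator topology. -/
def IsApproxInner (M : BBimod A X) (D : A →L[ℂ] X) : Prop :=
  ∃ (ι : Type) (lf : Filter ι) (x : ι → X), lf.NeBot ∧
    ∀ a, Tendsto (fun i => M.l a (x i) - M.r a (x i)) lf (𝓝 (D a))

/-- `D` is boundedly approximately inner: the approximating net of inner derivations
is uniformly bounded in operator norm. -/
def IsBddApproxInner (M : BBimod A X) (D : A →L[ℂ] X) : Prop :=
  ∃ (ι : Type) (lf : Filter ι) (x : ι → X) (K : ℝ), lf.NeBot ∧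
    (∀ i a, ‖M.l a (x i) - M.r a (x i)‖ ≤ K * ‖a‖) ∧
    ∀ a, Tendsto (fun i => M.l a (x i) - M.r a (x i)) lf (𝓝 (D a))

/-- `D` is approximately semi-inner: `D a = lim_i (a • m i - n i • a)`. -/
def IsApproxSemiInner (M : BBimod A X) (D : A →L[ℂ] X) : Prop :=
  ∃ (ι : Type) (lf : Filter ι) (m n : ι → X), lf.NeBot ∧
    ∀ a, Tendsto (fun i => M.l a (m i) - M.r a (n i)) lf (𝓝 (D a))

/-- The bimodule `X` is neo-unital: `X = A • X • A`. -/
def NeoUnital (M : BBimod A X) : Prop :=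
  ∀ x : X, ∃ a b y, x = M.l a (M.r b y)

/-- A derivation into the dual module is boundedly weak*-approximately inner. -/
def IsBddWeakStarApproxInner (M : BBimod A X) (D : A →L[ℂ] (X →L[ℂ] ℂ)) : Prop :=
  ∃ (ι : Type) (lf : Filter ι) (f : ι → (X →L[ℂ] ℂ)) (K : ℝ), lf.NeBot ∧
    (∀ i, ‖f i‖ ≤ K) ∧
    ∀ (a : A) (x : X),
      Tendsto (fun i => (M.dual.l a (f i) - M.dual.r a (f i)) x) lf (𝓝 (D a x))

end BBimod

/-- A Banach algebra is approximately amenable if every continuous derivation into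
the dual of a Banach bimodule is approximately inner. -/
def ApproxAmenable (A : Type*) [NonUnitalNormedRing A] [NormedSpace ℂ A] : Prop :=
  ∀ (X : Type) [NormedAddCommGroup X] [NormedSpace ℂ X] [CompleteSpace X]
    (M : BBimod A X) (D : A →L[ℂ] (X →L[ℂ] ℂ)),
    M.dual.IsDeriv D → M.dual.IsApproxInner D

/-- A Banach algebra is boundedly approximately amenable if every continuous derivation
into the dual of a Banach bimodule is boundedly approximately inner. -/
def BddApproxAmenable (A : Type*) [NonUnitalNormedRing A] [NormedSpace ℂ A] : Prop :=
  ∀ (X : Type) [NormedAddCommGroup X] [NormedSpace ℂ X] [CompleteSpace X]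
    (M : BBimod A X) (D : A →L[ℂ] (X →L[ℂ] ℂ)),
    M.dual.IsDeriv D → M.dual.IsBddApproxInner D

/-- A Banach algebra is boundedly approximately contractible if every continuous
derivation into any Banach bimodule is boundedly approximately inner. -/
def BddApproxContractible (A : Type*) [NonUnitalNormedRing A] [NormedSpace ℂ A] : Prop :=
  ∀ (X : Type) [NormedAddCommGroup X] [NormedSpace ℂ X] [CompleteSpace X]
    (M : BBimod A X) (D : A →L[ℂ] X),
    M.IsDeriv D → M.IsBddApproxInner D

/-- A Banach algebra is amenable if every continuous derivation into the dual of a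
Banach bimodule is inner. -/
def Amenable (A : Type*) [NonUnitalNormedRing A] [NormedSpace ℂ A] : Prop :=
  ∀ (X : Type) [NormedAddCommGroup X] [NormedSpace ℂ X] [CompleteSpace X]
    (M : BBimod A X) (D : A →L[ℂ] (X →L[ℂ] ℂ)),
    M.dual.IsDeriv D → M.dual.IsInner D

/-- `A` has a bounded (two-sided) approximate identity. -/
def HasBAI (A : Type*) [NonUnitalNormedRing A] : Prop :=
  ∃ (ι : Type) (lf : Filter ι) (e : ι → A) (K : ℝ), lf.NeBot ∧
    (∀ i, ‖e i‖ ≤ K) ∧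
    ∀ a : A, Tendsto (fun i => e i * a) lf (𝓝 a) ∧ Tendsto (fun i => a * e i) lf (𝓝 a)

/-- A witness that the Banach algebra `C` is (isometrically isomorphic to) the projective
tensor product `A ⊗̂ B`: a contractive bilinear multiplicative map with dense span satisfying
the universal property of the projective tensor norm. -/
structure ProjTensor (A B C : Type*) [NonUnitalNormedRing A] [NormedSpace ℂ A]
    [NonUnitalNormedRing B] [NormedSpace ℂ B]
    [NonUnitalNormedRing C] [NormedSpace ℂ C] where
  tp : A →L[ℂ] B →L[ℂ] C
  mk_mul : ∀ a a' b b', tp (a * a') (b * b') = tp a b * tp a' b'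
  norm_mk_le : ∀ a b, ‖tp a b‖ ≤ ‖a‖ * ‖b‖
  dense_span : Dense
    ((Submodule.span ℂ (Set.range fun p : A × B => tp p.1 p.2) : Submodule ℂ C) : Set C)
  lift : ∀ (E : Type) [NormedAddCommGroup E] [NormedSpace ℂ E] [CompleteSpace E]
    (φ : A →L[ℂ] B →L[ℂ] E), ∃ T : C →L[ℂ] E, ‖T‖ ≤ ‖φ‖ ∧ ∀ a b, T (tp a b) = φ a b

/-- A witness that the Banach space `T` is the projective tensor product `E ⊗̂ F`
of Banach spaces. -/
structure ProjTensorSp (E F T : Type*) [NormedAddCommGroup E] [NormedSpace ℂ E]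
    [NormedAddCommGroup F] [NormedSpace ℂ F]
    [NormedAddCommGroup T] [NormedSpace ℂ T] where
  tp : E →L[ℂ] F →L[ℂ] T
  norm_mk_le : ∀ e f, ‖tp e f‖ ≤ ‖e‖ * ‖f‖
  dense_span : Dense
    ((Submodule.span ℂ (Set.range fun p : E × F => tp p.1 p.2) : Submodule ℂ T) : Set T)
  lift : ∀ (W : Type) [NormedAddCommGroup W] [NormedSpace ℂ W] [CompleteSpace W]
    (φ : E →L[ℂ] F →L[ℂ] W), ∃ S : T →L[ℂ] W, ‖S‖ ≤ ‖φ‖ ∧ ∀ e f, S (tp e f) = φ e f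

/-- A witness that the unital Banach algebra `A'` is the unitization `A#` of `A`. -/
structure IsUnitization (A A' : Type*) [NonUnitalNormedRing A] [NormedSpace ℂ A]
    [NormedRing A'] [NormedAlgebra ℂ A'] where
  ι : A →L[ℂ] A'
  ι_mul : ∀ a b, ι (a * b) = ι a * ι b
  ι_norm : ∀ a, ‖ι a‖ = ‖a‖
  decomp : ∀ x : A', ∃! p : ℂ × A, x = algebraMap ℂ A' p.1 + ι p.2

/-- `ℓ²` with pointwise multiplication is approximately semi-amenable:
every continuous derivation from `ℓ²` into any Banach `ℓ²`-bimodule is approximately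
semi-inner.  The Banach algebra `A` is identified with `ℓ²` via a linear isometry
carrying the product to pointwise multiplication. -/
theorem l2_approximately_semi_amenable
    {A : Type*} [NonUnitalNormedRing A] [NormedSpace ℂ A] [CompleteSpace A]
    (e : A ≃ₗᵢ[ℂ] lp (fun _ : ℕ => ℂ) 2)
    (hmul : ∀ (f g : A) (k : ℕ), (e (f * g) : ∀ _ : ℕ, ℂ) k = (e f : ∀ _ : ℕ, ℂ) k * (e g : ∀ _ : ℕ, ℂ) k) :
    ∀ (X : Type) [NormedAddCommGroup X] [NormedSpace ℂ X] [CompleteSpace X]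
      (M : BBimod A X) (D : A →L[ℂ] X), M.IsDeriv D → M.IsApproxSemiInner D := by
  intro X _ _ _ M D hD
  -- standard basis idempotents
  set δ : ℕ → A := fun k => e.symm (lp.single 2 k (1 : ℂ)) with hδdef
  have heδ : ∀ k j, (e (δ k) : ∀ _ : ℕ, ℂ) j = if j = k then 1 else 0 := by
    intro k j
    simp only [hδdef, LinearIsometryEquiv.apply_symm_apply]
    rw [lp.single_apply]
    by_cases h : j = k
    · subst h; simp
    · simp [h]
  -- a * δ k = aₖ • δ k
  have hmulδ : ∀ (a : A) (k : ℕ), a * δ k = (e a : ∀ _ : ℕ, ℂ) k • δ k := by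
    intro a k
    apply e.injective
    apply lp.ext
    funext j
    have h1 := hmul a (δ k) j
    have h2 : (e ((e a : ∀ _ : ℕ, ℂ) k • δ k) : ∀ _ : ℕ, ℂ) j
        = (e a : ∀ _ : ℕ, ℂ) k * (e (δ k) : ∀ _ : ℕ, ℂ) j := by
      rw [e.map_smul]
      rfl
    rw [h1, h2, heδ]
    by_cases h : j = k
    · subst h; simp
    · simp [h]
  have hδmul : ∀ (a : A) (k : ℕ), δ k * a = (e a : ∀ _ : ℕ, ℂ) k • δ k := by
    intro a k
    apply e.injective
    apply lp.ext
    funext j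
    have h1 := hmul (δ k) a j
    have h2 : (e ((e a : ∀ _ : ℕ, ℂ) k • δ k) : ∀ _ : ℕ, ℂ) j
        = (e a : ∀ _ : ℕ, ℂ) k * (e (δ k) : ∀ _ : ℕ, ℂ) j := by
      rw [e.map_smul]
      rfl
    rw [h1, h2, heδ]
    by_cases h : j = k
    · subst h; simp [mul_comm]
    · simp [h]
  -- δ k is idempotent
  have hidem : ∀ k, δ k * δ k = δ k := by
    intro k
    rw [hmulδ, heδ]
    simp
  -- D δ k splits
  have hsplit : ∀ k, M.l (δ k) (D (δ k)) + M.r (δ k) (D (δ k)) = D (δ k) := by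
    intro k
    have := hD (δ k) (δ k)
    rw [hidem] at this
    exact this.symm
  refine ⟨ℕ, atTop, fun n => ∑ k ∈ Finset.range n, M.l (δ k) (D (δ k)),
    fun n => -∑ k ∈ Finset.range n, M.r (δ k) (D (δ k)), atTop_neBot, ?_⟩
  intro a
  -- the key identity
  have key : ∀ n, M.l a (∑ k ∈ Finset.range n, M.l (δ k) (D (δ k)))
      - M.r a (-∑ k ∈ Finset.range n, M.r (δ k) (D (δ k)))
      = D (∑ k ∈ Finset.range n, (e a : ∀ _ : ℕ, ℂ) k • δ k) := by
    intro n
    rw [map_sum, map_neg, map_sum, sub_neg_eq_add, map_sum]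
    rw [← Finset.sum_add_distrib]
    refine Finset.sum_congr rfl fun k _ => ?_
    have hl : M.l a (M.l (δ k) (D (δ k))) = (e a : ∀ _ : ℕ, ℂ) k • M.l (δ k) (D (δ k)) := by
      rw [← M.l_mul, hmulδ, _root_.map_smul, ContinuousLinearMap.smul_apply]
    have hr : M.r a (M.r (δ k) (D (δ k))) = (e a : ∀ _ : ℕ, ℂ) k • M.r (δ k) (D (δ k)) := by
      rw [← M.r_mul, hδmul, _root_.map_smul, ContinuousLinearMap.smul_apply]
    rw [hl, hr, ← smul_add, hsplit]
    exact (D.map_smul _ _).symm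
  simp only [key]
  -- convergence of the partial sums to a
  have hconv : Tendsto (fun n => ∑ k ∈ Finset.range n, (e a : ∀ _ : ℕ, ℂ) k • δ k)
      atTop (𝓝 a) := by
    have hs : HasSum (fun k : ℕ => lp.single 2 k ((e a : ∀ _ : ℕ, ℂ) k)) (e a) :=
      lp.hasSum_single (by norm_num) (e a)
    have ht := hs.tendsto_sum_nat
    have h2 := (e.symm.continuous.tendsto (e a)).comp ht
    rw [e.symm_apply_apply] at h2
    refine h2.congr fun n => ?_
    simp only [Function.comp_apply, map_sum]
    refine Finset.sum_congr rfl fun k _ => ?_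
    have h3 : lp.single 2 k ((e a : ∀ _ : ℕ, ℂ) k)
        = (e a : ∀ _ : ℕ, ℂ) k • lp.single (E := fun _ : ℕ => ℂ) 2 k 1 := by
      rw [← lp.single_smul]
      simp
    rw [h3, e.symm.map_smul]
  exact D.continuous.tendsto a |>.comp hconv
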